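/- In characteristic p > 0, for ideals J_1, J_2 in a ring R and q = p^t a power of p, the Frobenius power commutes with intersection: (J_1 ∩ J_2)^[q] = J_1^[q] ∩ J_2^[q], where J^[q] denotes the ideal generated by the q-th powers of the elements of J, provided the Frobenius endomorphism of R is flat (e.g. R a polynomial ring over a perfect field). -/

import Mathlib

open TensorProduct LinearMap

/-- The `q`-th Frobenius power of an ideal: the ideal generated by `q`-th powers of
its elements. -/
def frobeniusPower {R : Type*} [CommRing R] (J : Ideal R) (q : ℕ) : Ideal R :=
  Ideal.span ((fun a => a ^ q) '' (J : Set R))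


section FlatInf

variable {R M : Type*} [CommRing R] [AddCommGroup M] [Module R M]

/-- For a flat module, taking `I • ⊤` commutes with intersections of ideals. -/
theorem inf_smul_top_of_flat [Module.Flat R M] (I J : Ideal R) :
    (I ⊓ J) • (⊤ : Submodule R M) = (I • ⊤) ⊓ (J • ⊤) := by
  refine le_antisymm (le_inf (Submodule.smul_mono_left inf_le_left)
    (Submodule.smul_mono_left inf_le_right)) ?_
  rintro x ⟨hxI, hxJ⟩
  set g : R →ₗ[R] (R ⧸ I) × (R ⧸ J) := (Submodule.mkQ I).prod (Submodule.mkQ J) with hg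
  have hexact : Function.Exact ((I ⊓ J : Ideal R).subtype) g := by
    rw [LinearMap.exact_iff, hg, LinearMap.ker_prod, Submodule.ker_mkQ, Submodule.ker_mkQ,
      Submodule.range_subtype]
  have hE := Module.Flat.lTensor_exact M hexact
  have hI0 : (x ⊗ₜ (Submodule.Quotient.mk (1 : R)) : M ⊗[R] (R ⧸ I)) = 0 := by
    have h1 : (x ⊗ₜ (Submodule.Quotient.mk (1 : R)) : M ⊗[R] (R ⧸ I)) =
        (tensorQuotEquivQuotSMul M I).symm (Submodule.Quotient.mk x) := rfl
    rw [h1, (Submodule.Quotient.mk_eq_zero _).2 hxI, map_zero]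
  have hJ0 : (x ⊗ₜ (Submodule.Quotient.mk (1 : R)) : M ⊗[R] (R ⧸ J)) = 0 := by
    have h1 : (x ⊗ₜ (Submodule.Quotient.mk (1 : R)) : M ⊗[R] (R ⧸ J)) =
        (tensorQuotEquivQuotSMul M J).symm (Submodule.Quotient.mk x) := rfl
    rw [h1, (Submodule.Quotient.mk_eq_zero _).2 hxJ, map_zero]
  have h0 : lTensor M g (x ⊗ₜ (1 : R)) = 0 := by
    rw [lTensor_tmul]
    apply (TensorProduct.prodRight R R M (R ⧸ I) (R ⧸ J)).injective
    have : g 1 = (Submodule.Quotient.mk (1 : R), Submodule.Quotient.mk (1 : R)) := rfl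
    rw [this, TensorProduct.prodRight_tmul, map_zero, hI0, hJ0]
    rfl
  obtain ⟨y, hy⟩ := (hE (x ⊗ₜ (1 : R))).mp h0
  have key : ∀ z : M ⊗[R] ↥(I ⊓ J),
      TensorProduct.rid R M (lTensor M (I ⊓ J : Ideal R).subtype z) ∈
        (I ⊓ J) • (⊤ : Submodule R M) := by
    intro z
    induction z using TensorProduct.induction_on with
    | zero => simp
    | tmul m a =>
      rw [lTensor_tmul, Submodule.subtype_apply, TensorProduct.rid_tmul]
      exact Submodule.smul_mem_smul a.2 Submodule.mem_top
    | add u v hu hv =>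
      rw [map_add, map_add]
      exact Submodule.add_mem _ hu hv
  have hx : x = TensorProduct.rid R M (lTensor M (I ⊓ J : Ideal R).subtype y) := by
    rw [hy, TensorProduct.rid_tmul, one_smul]
  rw [hx]
  exact key y

end FlatInf

/-- A flat ring homomorphism commutes with intersections of ideals. -/
theorem Ideal.map_inf_of_flat {R S : Type*} [CommRing R] [CommRing S] (f : R →+* S)
    (hf : f.Flat) (I J : Ideal R) :
    Ideal.map f (I ⊓ J) = Ideal.map f I ⊓ Ideal.map f J := by
  letI : Algebra R S := f.toAlgebra
  haveI : Module.Flat R S := hf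
  have h := inf_smul_top_of_flat (M := S) I J
  rw [Ideal.smul_top_eq_map, Ideal.smul_top_eq_map, Ideal.smul_top_eq_map] at h
  have halg : algebraMap R S = f := rfl
  rw [halg] at h
  apply Submodule.restrictScalars_injective R S S
  rw [h]
  ext x
  simp [Submodule.restrictScalars_mem]

theorem iterateFrobenius_flat {R : Type*} [CommRing R] (p : ℕ) [ExpChar R p]
    (hflat : (frobenius R p).Flat) (t : ℕ) : (iterateFrobenius R p t).Flat := by
  induction t with
  | zero =>
    rw [iterateFrobenius_zero]
    exact RingHom.Flat.id R
  | succ n ih =>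
    rw [show n + 1 = 1 + n from Nat.add_comm n 1, iterateFrobenius_add, iterateFrobenius_one]
    haveI := ih
    haveI := hflat
    exact RingHom.Flat.comp ih hflat

/-- The Frobenius power is the image ideal under the iterated Frobenius. -/
theorem frobeniusPower_eq_map {R : Type*} [CommRing R] (p : ℕ) [ExpChar R p]
    (J : Ideal R) (t : ℕ) :
    frobeniusPower J (p ^ t) = Ideal.map (iterateFrobenius R p t) J := by
  rfl

/-- In characteristic `p > 0`, if the Frobenius endomorphism is flat, then Frobenius
powers commute with intersections: `(J₁ ∩ J₂)^[q] = J₁^[q] ∩ J₂^[q]` for `q = p^t`. -/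
theorem frobeniusPower_inf {R : Type*} [CommRing R] (p : ℕ) (hp : p.Prime) [CharP R p]
    [ExpChar R p] (hflat : (frobenius R p).Flat)
    (J₁ J₂ : Ideal R) (t : ℕ) :
    frobeniusPower (J₁ ⊓ J₂) (p ^ t) = frobeniusPower J₁ (p ^ t) ⊓ frobeniusPower J₂ (p ^ t) := by
  rw [frobeniusPower_eq_map, frobeniusPower_eq_map, frobeniusPower_eq_map]
  exact Ideal.map_inf_of_flat _ (iterateFrobenius_flat p hflat t) J₁ J₂
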